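/- arXiv:1008.1217 — 5 statements merged into one kernel-verified Lean document; each statement's English description precedes it below -/
import Mathlib

section
/- Let A be a diagonalizable upper triangular n × n matrix over a field k. Then there exists an invertible upper triangular matrix P in GL_n(k) such that P^{-1} A P is diagonal. -/
/-- A square matrix over a field is diagonalizable if it is similar (over that field)
to a diagonal matrix. -/
def Matrix.IsDiagonalizable {n : ℕ} {k : Type*} [Field k]
    (A : Matrix (Fin n) (Fin n) k) : Prop :=
  ∃ P : Matrix (Fin n) (Fin n) k, IsUnit P ∧ (P⁻¹ * A * P).IsDiag

open Polynomial Matrix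


lemma myAevalConj {R A : Type*} [CommSemiring R] [Ring A] [Algebra R A]
    (u v a : A) (hu : u * v = 1) (hv : v * u = 1) (q : R[X]) :
    aeval (v * a * u) q = v * aeval a q * u := by
  induction q using Polynomial.induction_on with
  | C c =>
      simp only [aeval_C, Algebra.algebraMap_eq_smul_one, mul_smul_comm, smul_mul_assoc,
        mul_one, hv]
  | add p r hp hr => simp [map_add, hp, hr, mul_add, add_mul]
  | monomial s c ih =>
      rw [show (C c * X ^ (s + 1) : R[X]) = C c * X ^ s * X by rw [pow_succ, mul_assoc],
        _root_.map_mul (aeval (v * a * u)) (C c * X ^ s) X,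
        _root_.map_mul (aeval a) (C c * X ^ s) X, aeval_X, aeval_X, ih]
      simp only [mul_assoc]
      rw [← mul_assoc u v, hu, one_mul]

lemma myAevalMulEigen {k : Type*} [Field k] {m : ℕ} (E : Matrix (Fin m) (Fin m) k)
    (v : Matrix (Fin m) (Fin 1) k) (lam : k) (h : E * v = lam • v) (p : k[X]) :
    aeval E p * v = eval lam p • v := by
  induction p using Polynomial.induction_on with
  | C c => simp [Algebra.algebraMap_eq_smul_one, smul_mul_assoc]
  | add p r hp hr => simp [map_add, hp, hr, add_mul, add_smul, Matrix.add_mul]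
  | monomial s c ih =>
      rw [show (C c * X ^ (s + 1) : k[X]) = C c * X ^ s * X by rw [pow_succ, mul_assoc],
        _root_.map_mul (aeval E) (C c * X ^ s) X, aeval_X, eval_mul, eval_X,
        Matrix.mul_assoc ((aeval E : k[X] →ₐ[k] _) (C c * X ^ s)) E v, h, Matrix.mul_smul, ih, smul_smul,
        mul_comm lam]
lemma myAevalBlockTri {k : Type*} [Field k] {m l : ℕ} (B : Matrix (Fin m) (Fin m) k)
    (Cm : Matrix (Fin m) (Fin l) k) (D : Matrix (Fin l) (Fin l) k) (q : k[X]) :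
    ∃ C', aeval (fromBlocks B Cm 0 D) q = fromBlocks (aeval B q) C' 0 (aeval D q) := by
  induction q using Polynomial.induction_on with
  | C c =>
      refine ⟨0, ?_⟩
      simp only [aeval_C, Algebra.algebraMap_eq_smul_one, ← fromBlocks_one (l := Fin m),
        fromBlocks_smul, smul_zero]
  | add p r hp hr =>
      obtain ⟨C1, h1⟩ := hp; obtain ⟨C2, h2⟩ := hr
      exact ⟨C1 + C2, by simp [map_add, h1, h2, fromBlocks_add]⟩
  | monomial s c ih =>
      obtain ⟨C', hC'⟩ := ih
      refine ⟨aeval B (Polynomial.C c * X ^ s) * Cm + C' * D, ?_⟩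
      rw [show (Polynomial.C c * X ^ (s + 1) : k[X]) = Polynomial.C c * X ^ s * X by
          rw [pow_succ, mul_assoc],
        _root_.map_mul (aeval (fromBlocks B Cm 0 D)) (Polynomial.C c * X ^ s) X, aeval_X, hC',
        _root_.map_mul (aeval B) (Polynomial.C c * X ^ s) X, aeval_X,
        _root_.map_mul (aeval D) (Polynomial.C c * X ^ s) X, aeval_X,
        fromBlocks_multiply]
      simp [Matrix.mul_zero, Matrix.zero_mul]

lemma myAevalEigenBlock {k : Type*} [Field k] {m : ℕ} (E : Matrix (Fin m) (Fin m) k)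
    (v : Matrix (Fin m) (Fin 1) k) (lam : k) (hEv : E * v = lam • v) (q : k[X]) :
    aeval (fromBlocks E v 0 (lam • (1 : Matrix (Fin 1) (Fin 1) k))) q =
      fromBlocks (aeval E q) (eval lam (derivative q) • v) 0
        (eval lam q • (1 : Matrix (Fin 1) (Fin 1) k)) := by
  induction q using Polynomial.induction_on with
  | C c =>
      simp only [aeval_C, Algebra.algebraMap_eq_smul_one, derivative_C, eval_zero, zero_smul,
        eval_C, ← fromBlocks_one (l := Fin m), fromBlocks_smul, smul_zero]
  | add p r hp hr =>
      simp [map_add, hp, hr, fromBlocks_add, add_smul]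
  | monomial s c ih =>
      have hder : eval lam (derivative (C c * X ^ s * X)) =
          eval lam (derivative (C c * X ^ s)) * lam + eval lam (C c * X ^ s) := by
        rw [derivative_mul, derivative_X, mul_one, eval_add, eval_mul, eval_X]
      have heval : eval lam (C c * X ^ s * X) = eval lam (C c * X ^ s) * lam := by
        rw [eval_mul, eval_X]
      rw [show (C c * X ^ (s + 1) : k[X]) = C c * X ^ s * X by rw [pow_succ, mul_assoc],
        _root_.map_mul (aeval (fromBlocks E v 0 (lam • 1))) (Polynomial.C c * X ^ s) X, aeval_X,
        ih, fromBlocks_multiply, hder, heval,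
        _root_.map_mul (aeval E) (Polynomial.C c * X ^ s) X, aeval_X, fromBlocks_inj]
      refine ⟨by simp, ?_, by simp, by rw [Matrix.zero_mul, zero_add, Matrix.smul_mul, Matrix.mul_smul, Matrix.mul_one, smul_smul]⟩
      rw [myAevalMulEigen E v lam hEv, Matrix.smul_mul, Matrix.mul_smul, Matrix.mul_one,
        smul_smul, add_smul]
      rw [add_comm]

lemma myAevalDiagonal {k : Type*} [Field k] {m : ℕ} (d : Fin m → k) (q : k[X]) :
    aeval (diagonal d) q = diagonal fun i => eval (d i) q := by
  induction q using Polynomial.induction_on with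
  | C c => simp [algebraMap_eq_diagonal]
  | add p r hp hr => simp [map_add, hp, hr, diagonal_add]
  | monomial s c ih =>
      rw [show (C c * X ^ (s + 1) : k[X]) = C c * X ^ s * X by rw [pow_succ, mul_assoc],
        _root_.map_mul (aeval (diagonal d)) (Polynomial.C c * X ^ s) X, aeval_X, ih,
        diagonal_mul_diagonal]
      ext i j
      by_cases h : i = j <;> simp [h, diagonal]
lemma myKey {k : Type*} [Field k] :
    ∀ (n : ℕ) (A : Matrix (Fin n) (Fin n) k) (q : k[X]), q.Separable → aeval A q = 0 →
      (∀ i j : Fin n, j < i → A i j = 0) →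
      ∃ P : Matrix (Fin n) (Fin n) k, IsUnit P ∧ (∀ i j : Fin n, j < i → P i j = 0) ∧
        (P⁻¹ * A * P).IsDiag := by
  intro n
  induction n with
  | zero => intro A q _ _ _; exact ⟨1, isUnit_one, fun i j _ => i.elim0, fun i j _ => i.elim0⟩
  | succ n IH =>
    intro A q hsep hq hA
    classical
    let e : Fin n ⊕ Fin 1 ≃ Fin (n + 1) := finSumFinEquiv
    let g := Matrix.reindexAlgEquiv k k e
    have hgapp : ∀ (M : Matrix (Fin n ⊕ Fin 1) (Fin n ⊕ Fin 1) k) x y,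
        g M (e x) (e y) = M x y := by
      intro M x y
      simp [g, Matrix.reindexAlgEquiv_apply, Matrix.reindex_apply, Matrix.submatrix_apply]
    have he1 : ∀ i : Fin n, e (Sum.inl i) = i.castSucc := fun i => rfl
    have he2 : ∀ j : Fin 1, e (Sum.inr j) = Fin.last n := by
      intro j
      have hj : j = 0 := Subsingleton.elim _ _
      subst hj
      apply Fin.ext
      simp [e, finSumFinEquiv]
    set B : Matrix (Fin n) (Fin n) k := Matrix.of fun i j => A i.castSucc j.castSucc with hB
    set Cm : Matrix (Fin n) (Fin 1) k := Matrix.of fun i _ => A i.castSucc (Fin.last n) with hCm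
    set lam : k := A (Fin.last n) (Fin.last n) with hlam
    set A' : Matrix (Fin n ⊕ Fin 1) (Fin n ⊕ Fin 1) k := fromBlocks B Cm 0 (lam • 1) with hA'
    have hgA : g A' = A := by
      ext i j
      obtain ⟨i', rfl⟩ := e.surjective i
      obtain ⟨j', rfl⟩ := e.surjective j
      rw [hgapp]
      rcases i' with i' | i' <;> rcases j' with j' | j'
      · simp [hA', fromBlocks_apply₁₁, hB, he1]
      · simp [hA', fromBlocks_apply₁₂, hCm, he1, he2]
      · rw [he1, he2]
        simp only [hA', fromBlocks_apply₂₁, Matrix.zero_apply]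
        exact (hA _ _ (Fin.castSucc_lt_last j')).symm
      · have hij : i' = j' := Subsingleton.elim _ _
        subst hij
        rw [he2]
        simp [hA', fromBlocks_apply₂₂, Matrix.smul_apply, Matrix.one_apply, hlam]
    have hq' : aeval A' q = 0 := by
      have h1 : A' = g.symm A := by rw [← hgA]; simp
      have h2 := Polynomial.aeval_algHom_apply g.symm.toAlgHom A q
      change Polynomial.aeval (g.symm A) q = g.symm (Polynomial.aeval A q) at h2
      rw [h1, h2, hq, map_zero]
    have hqB : aeval B q = 0 := by
      obtain ⟨C', hC'⟩ := myAevalBlockTri B Cm (lam • 1) q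
      rw [hC'] at hq'
      ext i j
      have h3 := congrFun (congrFun hq' (Sum.inl i)) (Sum.inl j)
      simpa [fromBlocks_apply₁₁] using h3
    have hBt : ∀ i j : Fin n, j < i → B i j = 0 := fun i j h =>
      hA _ _ (by simpa [Fin.castSucc_lt_castSucc_iff] using h)
    obtain ⟨Q, hQu, hQt, hQd⟩ := IH B q hsep hqB hBt
    have hQdet : IsUnit Q.det := (Matrix.isUnit_iff_isUnit_det Q).mp hQu
    have hQR : Q * Q⁻¹ = 1 := Matrix.mul_nonsing_inv Q hQdet
    have hRQ : Q⁻¹ * Q = 1 := Matrix.nonsing_inv_mul Q hQdet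
    set E : Matrix (Fin n) (Fin n) k := Q⁻¹ * B * Q with hEdef
    set C1 : Matrix (Fin n) (Fin 1) k := Q⁻¹ * Cm with hC1
    set x : Matrix (Fin n) (Fin 1) k :=
      Matrix.of (fun i _ => if E i i = lam then 0 else (lam - E i i)⁻¹ * C1 i 0) with hx
    set v : Matrix (Fin n) (Fin 1) k := E * x + C1 - lam • x with hvdef
    have hEx : ∀ (w : Matrix (Fin n) (Fin 1) k) (i : Fin n), (E * w) i 0 = E i i * w i 0 := by
      intro w i
      rw [Matrix.mul_apply]
      exact Finset.sum_eq_single i (fun b _ hb => by rw [hQd (Ne.symm hb), zero_mul]) (by simp)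
    have hvs : ∀ i, E i i ≠ lam → v i 0 = 0 := by
      intro i hi
      have hne : lam - E i i ≠ 0 := sub_ne_zero.mpr (Ne.symm hi)
      have hvi : v i 0 = (E i i - lam) * x i 0 + C1 i 0 := by
        simp only [hvdef, Matrix.sub_apply, Matrix.add_apply, Matrix.smul_apply, smul_eq_mul,
          hEx x i]
        ring
      rw [hvi]
      simp only [hx, Matrix.of_apply, if_neg hi]
      field_simp
      ring
    have hEv : E * v = lam • v := by
      ext i j
      have hj : j = 0 := Subsingleton.elim _ _
      subst hj
      rw [hEx v i, Matrix.smul_apply, smul_eq_mul]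
      by_cases h : E i i = lam
      · rw [h]
      · rw [hvs i h, mul_zero, mul_zero]
    set P' : Matrix (Fin n ⊕ Fin 1) (Fin n ⊕ Fin 1) k := fromBlocks Q (Q * x) 0 1 with hP'
    set R' : Matrix (Fin n ⊕ Fin 1) (Fin n ⊕ Fin 1) k := fromBlocks Q⁻¹ (-x) 0 1 with hR'
    have hPR : P' * R' = 1 := by
      rw [hP', hR', fromBlocks_multiply, ← fromBlocks_one (l := Fin n), fromBlocks_inj]
      exact ⟨by simp [hQR], by simp [Matrix.mul_neg], by simp, by simp⟩
    have hRP : R' * P' = 1 := by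
      rw [hP', hR', fromBlocks_multiply, ← fromBlocks_one (l := Fin n), fromBlocks_inj]
      refine ⟨by simp [hRQ], ?_, by simp, by simp⟩
      rw [← Matrix.mul_assoc, hRQ]
      simp
    have hM' : R' * A' * P' = fromBlocks E v 0 (lam • 1) := by
      rw [hR', hA', hP', fromBlocks_multiply, fromBlocks_multiply, fromBlocks_inj]
      refine ⟨by simp [hEdef], ?_, by simp, by simp⟩
      rw [Matrix.mul_zero, add_zero, Matrix.mul_one, Matrix.neg_mul, Matrix.mul_smul,
        Matrix.mul_one, hvdef, hEdef, hC1, ← Matrix.mul_assoc]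
      abel
    have hqM : aeval (fromBlocks E v 0 (lam • (1 : Matrix (Fin 1) (Fin 1) k))) q = 0 := by
      rw [← hM', myAevalConj P' R' A' hPR hRP q, hq', Matrix.mul_zero, Matrix.zero_mul]
    rw [myAevalEigenBlock E v lam hEv q] at hqM
    have hlameval : eval lam q = 0 := by
      have h3 := congrFun (congrFun hqM (Sum.inr 0)) (Sum.inr 0)
      simpa [fromBlocks_apply₂₂, Matrix.smul_apply, Matrix.one_apply] using h3
    have hderne : eval lam (derivative q) ≠ 0 := by
      obtain ⟨a, b, hab⟩ := hsep
      intro h0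
      have h4 := congrArg (eval lam) hab
      simp [hlameval, h0] at h4
    have hv0 : v = 0 := by
      ext i j
      have hj : j = 0 := Subsingleton.elim _ _
      subst hj
      have h5 := congrFun (congrFun hqM (Sum.inl i)) (Sum.inr 0)
      simp only [fromBlocks_apply₁₂, Matrix.smul_apply, smul_eq_mul, Matrix.zero_apply] at h5
      rcases mul_eq_zero.mp h5 with h | h
      · exact absurd h hderne
      · simpa using h
    have hgPR : g P' * g R' = 1 := by rw [← _root_.map_mul, hPR, _root_.map_one]
    have hunit : IsUnit (g P') := by
      rw [Matrix.isUnit_iff_isUnit_det]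
      exact IsUnit.of_mul_eq_one _ (by rw [← Matrix.det_mul, hgPR, Matrix.det_one])
    have hinv : (g P')⁻¹ = g R' := Matrix.inv_eq_right_inv hgPR
    refine ⟨g P', hunit, ?_, ?_⟩
    · intro i j hij
      obtain ⟨i', rfl⟩ := e.surjective i
      obtain ⟨j', rfl⟩ := e.surjective j
      rw [hgapp]
      rcases i' with i' | i' <;> rcases j' with j' | j'
      · rw [he1, he1, Fin.castSucc_lt_castSucc_iff] at hij
        simpa [hP', fromBlocks_apply₁₁] using hQt i' j' hij
      · rw [he1, he2] at hij
        exact absurd hij (lt_asymm (Fin.castSucc_lt_last i'))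
      · simp [hP', fromBlocks_apply₂₁]
      · rw [he2, he2] at hij
        exact absurd hij (lt_irrefl _)
    · rw [hinv, ← hgA, ← _root_.map_mul, ← _root_.map_mul, hM', hv0]
      intro i j hij
      obtain ⟨i', rfl⟩ := e.surjective i
      obtain ⟨j', rfl⟩ := e.surjective j
      rw [hgapp]
      have hne : i' ≠ j' := fun h => hij (by rw [h])
      rcases i' with i' | i' <;> rcases j' with j' | j'
      · simpa [fromBlocks_apply₁₁] using hQd (show i' ≠ j' by simpa using hne)
      · simp [fromBlocks_apply₁₂]
      · simp [fromBlocks_apply₂₁]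
      · exact absurd (congrArg Sum.inr (Subsingleton.elim i' j')) hne

/-- If `A` is a diagonalizable upper triangular matrix over a field `k`, then there is an
invertible *upper triangular* matrix `P` such that `P⁻¹ * A * P` is diagonal. -/
theorem upperTriangular_diagonalizable_by_upperTriangular {n : ℕ} {k : Type*} [Field k]
    (A : Matrix (Fin n) (Fin n) k) (hA : ∀ i j : Fin n, j < i → A i j = 0)
    (hdiag : A.IsDiagonalizable) :
    ∃ P : Matrix (Fin n) (Fin n) k, IsUnit P ∧ (∀ i j : Fin n, j < i → P i j = 0) ∧
      (P⁻¹ * A * P).IsDiag := by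
  classical
  obtain ⟨P₀, hP₀u, hP₀d⟩ := hdiag
  have hdet : IsUnit P₀.det := (Matrix.isUnit_iff_isUnit_det P₀).mp hP₀u
  set E₀ : Matrix (Fin n) (Fin n) k := P₀⁻¹ * A * P₀ with hE₀
  set s : Finset k := Finset.image (fun i => E₀ i i) Finset.univ with hs
  set q : Polynomial k := ∏ μ ∈ s, (Polynomial.X - Polynomial.C μ) with hq
  have hsep : q.Separable := by
    rw [hq]
    exact Polynomial.separable_prod_X_sub_C_iff'.mpr fun x _ y _ h => h
  have hqE : Polynomial.aeval E₀ q = 0 := by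
    have hdg : E₀ = Matrix.diagonal E₀.diag := (hP₀d.diagonal_diag).symm
    rw [hdg, myAevalDiagonal]
    have hz : ∀ i : Fin n, Polynomial.eval (E₀.diag i) q = 0 := by
      intro i
      rw [hq, Polynomial.eval_prod]
      refine Finset.prod_eq_zero (Finset.mem_image_of_mem _ (Finset.mem_univ i)) ?_
      simp [Matrix.diag]
    have : (fun i => Polynomial.eval (E₀.diag i) q) = fun _ => (0 : k) := funext hz
    rw [this, Matrix.diagonal_zero]
  have hAconj : P₀ * E₀ * P₀⁻¹ = A := by
    rw [hE₀, ← Matrix.mul_assoc, ← Matrix.mul_assoc, Matrix.mul_nonsing_inv P₀ hdet, one_mul,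
      Matrix.mul_assoc, Matrix.mul_nonsing_inv P₀ hdet, Matrix.mul_one]
  have hqA : Polynomial.aeval A q = 0 := by
    rw [← hAconj, myAevalConj P₀⁻¹ P₀ E₀ (Matrix.nonsing_inv_mul P₀ hdet)
      (Matrix.mul_nonsing_inv P₀ hdet) q, hqE, Matrix.mul_zero, Matrix.zero_mul]
  exact myKey n A q hsep hqA hA
end

section
/- Let V be a finite-dimensional vector space over a field k, let S : V → V be a diagonalizable endomorphism, and let B be an ordered basis of V such that the matrix of S with respect to B is upper triangular. Let V_0 be the 0-eigenspace (kernel) of S and let V_* be the sum of the eigenspaces of S for all nonzero eigenvalues, so V = V_0 ⊕ V_*. Let P : V → V be the projection with image V_* and kernel V_0. Let T : V → V be an endomorphism whose matrix with respect to B is strictly upper triangular. Then the restriction of P ∘ (S + T) to V_*, as an endomorphism of V_*, is invertible. -/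
section Aux

variable {k : Type*} [Field k] {V : Type*} [AddCommGroup V] [Module k V]
  {m : ℕ} (B : Module.Basis (Fin m) k V)

private lemma repr_map_apply (f : Module.End k V) (v : V) (j : Fin m) :
    B.repr (f v) j = ∑ l, LinearMap.toMatrix B B f j l * B.repr v l := by
  rw [← LinearMap.toMatrix_mulVec_repr B B f v]
  simp [Matrix.mulVec, dotProduct]

/-- For an upper-triangular endomorphism, the diagonal entry at the top nonzero
coordinate of an eigenvector equals the eigenvalue. -/
private lemma eig_top {S : Module.End k V}
    (hStri : ∀ i j : Fin m, j < i → LinearMap.toMatrix B B S i j = 0)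
    {μ : k} {w : V} (hw : w ∈ S.eigenspace μ) {j : Fin m}
    (hj : B.repr w j ≠ 0) (htop : ∀ l, j < l → B.repr w l = 0) :
    LinearMap.toMatrix B B S j j = μ := by
  have hSw : S w = μ • w := Module.End.mem_eigenspace_iff.mp hw
  have h1 : B.repr (S w) j = LinearMap.toMatrix B B S j j * B.repr w j := by
    rw [repr_map_apply]
    refine Finset.sum_eq_single j (fun l _ hne => ?_) (by simp)
    rcases lt_or_gt_of_ne hne with h | h
    · rw [hStri j l h, zero_mul]
    · rw [htop l h, mul_zero]
  have h2 : B.repr (S w) j = μ * B.repr w j := by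
    rw [hSw, map_smul]; simp
  have := h1.symm.trans h2
  exact mul_right_cancel₀ hj this

/-- A nonzero element of the span of the eigenspaces for nonzero eigenvalues has a
top nonzero coordinate whose diagonal entry is nonzero. -/
private lemma vstar_top {S : Module.End k V}
    (hStri : ∀ i j : Fin m, j < i → LinearMap.toMatrix B B S i j = 0)
    {v : V} (hv : v ∈ ⨆ μ : k, ⨆ _ : μ ≠ 0, S.eigenspace μ) (hv0 : v ≠ 0) :
    ∃ j : Fin m, B.repr v j ≠ 0 ∧ (∀ l, j < l → B.repr v l = 0) ∧
      LinearMap.toMatrix B B S j j ≠ 0 := by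
  classical
  rw [Submodule.mem_iSup_iff_exists_finsupp] at hv
  obtain ⟨f, hf, hsum⟩ := hv
  have hfe : ∀ μ : k, μ ≠ 0 → f μ ∈ S.eigenspace μ := by
    intro μ hμ
    have := hf μ
    rwa [iSup_pos hμ] at this
  have hf0 : f 0 = 0 := by
    have := hf 0
    rw [iSup_neg (by simp)] at this
    simpa using this
  have repr_sum : ∀ j : Fin m, B.repr v j = ∑ μ ∈ f.support, B.repr (f μ) j := by
    intro j
    rw [← hsum, Finsupp.sum, map_sum]
    exact Finsupp.finset_sum_apply _ _ _
  set U : Finset (Fin m) := f.support.biUnion (fun μ => (B.repr (f μ)).support) with hU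
  have hUne : U.Nonempty := by
    obtain ⟨j, hj⟩ : ∃ j, B.repr v j ≠ 0 := by
      by_contra h
      push_neg at h
      exact hv0 (B.repr.map_eq_zero_iff.mp (Finsupp.ext h))
    rw [repr_sum j] at hj
    obtain ⟨μ, hμs, hμ⟩ := Finset.exists_ne_zero_of_sum_ne_zero hj
    exact ⟨j, Finset.mem_biUnion.mpr ⟨μ, hμs, Finsupp.mem_support_iff.mpr hμ⟩⟩
  set J := U.max' hUne with hJ
  have habove : ∀ μ ∈ f.support, ∀ l, J < l → B.repr (f μ) l = 0 := by
    intro μ hμ l hl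
    by_contra h
    have : l ∈ U := Finset.mem_biUnion.mpr ⟨μ, hμ, Finsupp.mem_support_iff.mpr h⟩
    exact absurd (Finset.le_max' U l this) (not_le_of_gt hl)
  obtain ⟨μ₀, hμ₀s, hμ₀J⟩ := Finset.mem_biUnion.mp (U.max'_mem hUne)
  have hμ₀J' : B.repr (f μ₀) J ≠ 0 := Finsupp.mem_support_iff.mp hμ₀J
  have hμ₀ne : μ₀ ≠ 0 := by
    intro h
    rw [h, hf0] at hμ₀J'
    simp at hμ₀J'
  have hdJ : LinearMap.toMatrix B B S J J = μ₀ :=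
    eig_top B hStri (hfe μ₀ hμ₀ne) hμ₀J' (habove μ₀ hμ₀s)
  refine ⟨J, ?_, ?_, ?_⟩
  · rw [repr_sum J]
    rw [Finset.sum_eq_single_of_mem μ₀ hμ₀s]
    · exact hμ₀J'
    · intro μ hμs hne
      by_contra h
      have hμne : μ ≠ 0 := by
        intro h0
        rw [h0, hf0] at h
        simp at h
      have := eig_top B hStri (hfe μ hμne) h (habove μ hμs)
      rw [hdJ] at this
      exact hne this.symm
  · intro l hl
    rw [repr_sum l]
    exact Finset.sum_eq_zero (fun μ hμ => habove μ hμ l hl)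
  · rw [hdJ]; exact hμ₀ne

end Aux

/-- Let `S : V → V` be a diagonalizable endomorphism whose matrix in an ordered basis `B`
is upper triangular, let `V₀ = ker S` be the `0`-eigenspace and `V⋆` the sum of the
eigenspaces for the nonzero eigenvalues, and let `P` be the projection onto `V⋆` along
`V₀`.  If `T : V → V` has strictly upper triangular matrix in the basis `B`, then the
restriction of `P ∘ (S + T)` to `V⋆` is an invertible endomorphism of `V⋆`. -/
theorem restrict_proj_comp_invertible
    {k : Type*} [Field k] {V : Type*} [AddCommGroup V] [Module k V]
    [FiniteDimensional k V] {m : ℕ} (B : Module.Basis (Fin m) k V)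
    (S T P : Module.End k V)
    (hSdiag : ⨆ μ : k, S.eigenspace μ = ⊤)
    (hStri : ∀ i j : Fin m, j < i → LinearMap.toMatrix B B S i j = 0)
    (hTtri : ∀ i j : Fin m, j ≤ i → LinearMap.toMatrix B B T i j = 0)
    (Vstar : Submodule k V) (hVstar : Vstar = ⨆ μ : k, ⨆ _ : μ ≠ 0, S.eigenspace μ)
    (hPmem : ∀ v : V, P v ∈ Vstar)
    (hPid : ∀ v ∈ Vstar, P v = v)
    (hPker : ∀ v ∈ S.eigenspace 0, P v = 0) :
    Function.Bijective ((P ∘ₗ (S + T)).restrict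
      (fun x (_ : x ∈ Vstar) => hPmem ((S + T) x))) := by
  set F := (P ∘ₗ (S + T)).restrict (fun x (_ : x ∈ Vstar) => hPmem ((S + T) x)) with hF
  have hinj : Function.Injective F := by
    rw [injective_iff_map_eq_zero]
    intro x hx
    by_contra hx0
    have hv0 : (x : V) ≠ 0 := fun h => hx0 (Subtype.ext h)
    -- P ((S+T) x) = 0
    have hPu : P ((S + T) (x : V)) = 0 := by
      have := congrArg Subtype.val hx
      simpa [hF, LinearMap.restrict_apply] using this
    -- decompose u := (S+T)x as u₀ + u⋆
    set u := (S + T) (x : V) with hu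
    have hsplit : u ∈ S.eigenspace 0 ⊔ Vstar := by
      have hle : (⊤ : Submodule k V) ≤ S.eigenspace 0 ⊔ Vstar := by
        rw [← hSdiag]
        refine iSup_le fun μ => ?_
        by_cases hμ : μ = 0
        · rw [hμ]; exact le_sup_left
        · refine le_trans ?_ le_sup_right
          rw [hVstar]
          exact le_iSup_of_le μ (le_iSup_of_le hμ le_rfl)
      exact hle Submodule.mem_top
    obtain ⟨u0, hu0, us, hus, huu⟩ := Submodule.mem_sup.mp hsplit
    have hus0 : us = 0 := by
      have : P u = P u0 + P us := by rw [← map_add, huu]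
      rw [hPu, hPker u0 hu0, hPid us hus, zero_add] at this
      exact this.symm
    have hu_eig : u ∈ S.eigenspace 0 := by
      rw [← huu, hus0, add_zero]; exact hu0
    -- top coordinate of x
    obtain ⟨J, hJ1, hJ2, hJ3⟩ := vstar_top B hStri (hVstar ▸ x.2) hv0
    -- matrix of S + T
    have hM : ∀ i j : Fin m, LinearMap.toMatrix B B (S + T) i j
        = LinearMap.toMatrix B B S i j + LinearMap.toMatrix B B T i j := by
      intro i j; rw [map_add]; rfl
    have h1 : B.repr u J = LinearMap.toMatrix B B S J J * B.repr (x : V) J := by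
      rw [hu, repr_map_apply]
      rw [Finset.sum_eq_single J]
      · rw [hM, hTtri J J le_rfl, add_zero]
      · intro l _ hne
        rcases lt_or_gt_of_ne hne with h | h
        · rw [hM, hStri J l h, hTtri J l h.le, add_zero, zero_mul]
        · rw [hJ2 l h, mul_zero]
      · simp
    have h2 : ∀ l, J < l → B.repr u l = 0 := by
      intro l hl
      rw [hu, repr_map_apply]
      refine Finset.sum_eq_zero (fun r _ => ?_)
      by_cases hr : J < r
      · rw [hJ2 r hr, mul_zero]
      · push_neg at hr
        have hrl : r < l := lt_of_le_of_lt hr hl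
        rw [hM, hStri l r hrl, hTtri l r hrl.le, add_zero, zero_mul]
    have huJ : B.repr u J ≠ 0 := by
      rw [h1]; exact mul_ne_zero hJ3 hJ1
    have := eig_top B hStri hu_eig huJ h2
    exact hJ3 this
  exact ⟨hinj, LinearMap.injective_iff_surjective.mp hinj⟩
end

section
/- Let k be an algebraically closed field of characteristic zero, g a finite-dimensional Lie algebra over k with solvable radical r, and V a finite-dimensional irreducible g-module. Then the ideal [g,r] acts trivially on V: for every y in [g,r] and every v in V, y · v = 0. -/
open Module LinearMap

attribute [local instance] LieRing.ofAssociativeRing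

section Core
variable {k : Type*} [Field k] [CharZero k]
variable {g : Type*} [LieRing g] [LieAlgebra k g]
variable {V : Type*} [AddCommGroup V] [Module k V] [FiniteDimensional k V]
  [LieRingModule g V] [LieModule k g V]

/-- Invariance lemma: if `χ` is a weight of the ideal `I` with a nonzero weight vector,
then `χ` vanishes on `⁅g, I⁆`. -/
lemma weight_vanishes_on_bracket
    (I : LieIdeal k g) (χ : I → k) (w : V) (hw : w ≠ 0)
    (hwt : ∀ z : I, ⁅(z : g), w⁆ = χ z • w)
    (x : g) (y : I) :
    χ ⟨⁅x, (y : g)⁆, I.lie_mem y.2⟩ = 0 := by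
  classical
  set f : Module.End k V := LieModule.toEnd k g V x with hf
  set B : I → Module.End k V := fun z => LieModule.toEnd k g V (z : g) with hB
  set U : ℕ → Submodule k V := fun n => Submodule.span k ((fun i => (f ^ i) w) '' Set.Iio n)
    with hU
  have hUmono : Monotone U := by
    intro a b hab
    exact Submodule.span_mono (Set.image_mono (Set.Iio_subset_Iio hab))
  have hmem : ∀ i n, i < n → (f ^ i) w ∈ U n := fun i n hin =>
    Submodule.subset_span ⟨i, hin, rfl⟩
  -- key claim
  have claim : ∀ n, ∀ z : I, B z ((f ^ n) w) - χ z • ((f ^ n) w) ∈ U n := by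
    intro n
    induction n with
    | zero =>
        intro z
        have h0 : (1 : Module.End k V) w = w := rfl
        simp only [pow_zero, h0]
        have : B z w = χ z • w := hwt z
        rw [this, sub_self]
        exact (U 0).zero_mem
    | succ n ih =>
        intro z
        have hzz : (⁅x, (z : g)⁆) ∈ I := I.lie_mem z.2
        set z' : I := ⟨⁅x, (z : g)⁆, hzz⟩ with hz'
        have hcomm : B z ((f ^ (n+1)) w)
            = f (B z ((f ^ n) w)) - B z' ((f ^ n) w) := by
          have : (f ^ (n+1)) w = f ((f ^ n) w) := by
            rw [pow_succ']; rfl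
          rw [this]
          show ⁅(z : g), ⁅x, (f ^ n) w⁆⁆ = ⁅x, ⁅(z : g), (f ^ n) w⁆⁆ - ⁅⁅x, (z : g)⁆, (f ^ n) w⁆
          rw [leibniz_lie x (z : g) ((f ^ n) w)]
          abel
        have h1 : f (B z ((f ^ n) w) - χ z • (f ^ n) w) ∈ U (n+1) := by
          have := ih z
          -- f maps U n into U (n+1)
          have hfmap : ∀ v ∈ U n, f v ∈ U (n+1) := by
            intro v hv
            induction hv using Submodule.span_induction with
            | mem v hv =>
                obtain ⟨i, hi, rfl⟩ := hv
                have : f ((f ^ i) w) = (f ^ (i+1)) w := by rw [pow_succ']; rfl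
                rw [this]
                exact hmem _ _ (Nat.succ_lt_succ hi)
            | zero => simp
            | add u v _ _ hu hv => rw [map_add]; exact (U (n+1)).add_mem hu hv
            | smul c u _ hu => rw [map_smul]; exact (U (n+1)).smul_mem c hu
          exact hfmap _ this
        have h2 : B z' ((f ^ n) w) ∈ U (n+1) := by
          have h3 := ih z'
          have h4 : χ z' • (f ^ n) w ∈ U (n+1) := (U (n+1)).smul_mem _ (hmem _ _ (Nat.lt_succ_self n))
          have := (U (n+1)).add_mem (hUmono (Nat.le_succ n) h3) h4
          simpa using this
        have key : B z ((f ^ (n+1)) w) - χ z • (f ^ (n+1)) w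
            = f (B z ((f ^ n) w) - χ z • (f ^ n) w) - B z' ((f ^ n) w) := by
          rw [hcomm]
          have : (f ^ (n+1)) w = f ((f ^ n) w) := by rw [pow_succ']; rfl
          rw [this, map_sub, map_smul]
          abel
        rw [key]
        exact (U (n+1)).sub_mem h1 h2
  -- B z maps U n into U n
  have hBmap : ∀ (n : ℕ) (z : I), ∀ v ∈ U n, B z v ∈ U n := by
    intro n z v hv
    induction hv using Submodule.span_induction with
    | mem v hv =>
        obtain ⟨i, hi, rfl⟩ := hv
        have h1 := claim i z
        have h2 : χ z • (f ^ i) w ∈ U n := (U n).smul_mem _ (hmem _ _ hi)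
        have := (U n).add_mem (hUmono (le_of_lt hi) h1) h2
        simpa using this
    | zero => simp
    | add u v _ _ hu hv => rw [map_add]; exact (U n).add_mem hu hv
    | smul c u _ hu => rw [map_smul]; exact (U n).smul_mem c hu
  -- f maps U n into U (n+1)
  have hfmap : ∀ (n : ℕ), ∀ v ∈ U n, f v ∈ U (n+1) := by
    intro n v hv
    induction hv using Submodule.span_induction with
    | mem v hv =>
        obtain ⟨i, hi, rfl⟩ := hv
        have : f ((f ^ i) w) = (f ^ (i+1)) w := by rw [pow_succ']; rfl
        rw [this]
        exact hmem _ _ (Nat.succ_lt_succ hi)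
    | zero => simp
    | add u v _ _ hu hv => rw [map_add]; exact (U (n+1)).add_mem hu hv
    | smul c u _ hu => rw [map_smul]; exact (U (n+1)).smul_mem c hu
  -- the difference operator lowers the filtration
  set D : I → Module.End k V := fun z => B z - χ z • 1 with hD
  have hDmap : ∀ (n : ℕ) (z : I), ∀ v ∈ U (n+1), D z v ∈ U n := by
    intro n z v hv
    induction hv using Submodule.span_induction with
    | mem v hv =>
        obtain ⟨i, hi, rfl⟩ := hv
        have h1 := claim i z
        have : D z ((f ^ i) w) = B z ((f ^ i) w) - χ z • (f ^ i) w := rfl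
        rw [this]
        exact hUmono (Nat.lt_succ_iff.mp hi) h1
    | zero => simp
    | add u v _ _ hu hv => rw [map_add]; exact (U n).add_mem hu hv
    | smul c u _ hu => rw [map_smul]; exact (U n).smul_mem c hu
  -- stabilization
  obtain ⟨N₀, hN₀⟩ := monotone_stabilizes_iff_noetherian.mpr inferInstance (⟨U, hUmono⟩ : ℕ →o Submodule k V)
  set N := N₀ + 1 with hN
  have hstab : ∀ m, N ≤ m → U N = U m := by
    intro m hm
    exact (hN₀ N (Nat.le_succ N₀)).symm.trans (hN₀ m (le_trans (Nat.le_succ N₀) hm))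
  set UN := U N with hUN
  have hfUN : ∀ v ∈ UN, f v ∈ UN := by
    intro v hv
    have := hfmap N v hv
    rwa [← hstab (N+1) (Nat.le_succ N)] at this
  have hBUN : ∀ z : I, ∀ v ∈ UN, B z v ∈ UN := fun z v hv => hBmap N z v hv
  -- powers of D z on UN
  have hDpow : ∀ (j : ℕ) (z : I) (v : V), v ∈ UN → ((D z) ^ j) v ∈ U (N - j) := by
    intro j
    induction j with
    | zero => intro z v hv; simpa using hv
    | succ j ih =>
        intro z v hv
        have h1 : ((D z) ^ (j+1)) v = D z (((D z) ^ j) v) := by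
          rw [pow_succ']; rfl
        rw [h1]
        have h2 := ih z v hv
        rcases Nat.lt_or_ge j N with hj | hj
        · have h3 : N - j = (N - (j+1)) + 1 := by omega
          rw [h3] at h2
          exact hDmap _ z _ h2
        · have h3 : N - j = 0 := by omega
          rw [h3] at h2
          have h4 : N - (j+1) = 0 := by omega
          rw [h4]
          exact hDmap 0 z _ (hUmono (Nat.zero_le 1) h2)
  have hU0 : U 0 = ⊥ := by
    have h : ((fun i => (f ^ i) w) '' Set.Iio 0) = ∅ := by
      have : Set.Iio (0 : ℕ) = ∅ := by ext i; simp
      rw [this, Set.image_empty]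
    show Submodule.span k ((fun i => (f ^ i) w) '' Set.Iio 0) = ⊥
    rw [h, Submodule.span_empty]
  -- restrictions
  set fr : UN →ₗ[k] UN := f.restrict hfUN with hfr
  set Br : I → (UN →ₗ[k] UN) := fun z => (B z).restrict (hBUN z) with hBr
  set z' : I := ⟨⁅x, (y : g)⁆, I.lie_mem y.2⟩ with hz'
  -- Br z' is a commutator
  have hBz' : B z' = f * B y - B y * f := by
    have := LieHom.map_lie (LieModule.toEnd k g V) x (y : g)
    rw [Ring.lie_def] at this
    exact this
  have hBrz' : Br z' = fr * Br y - Br y * fr := by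
    ext v
    have h1 : ((Br z') v : V) = B z' (v : V) := rfl
    have h2 : (((fr * Br y - Br y * fr)) v : V) = f (B y (v : V)) - B y (f (v : V)) := rfl
    rw [h1, h2, hBz']
    rfl
  have htr0 : LinearMap.trace k UN (Br z') = 0 := by
    rw [hBrz', map_sub, LinearMap.trace_mul_comm, sub_self]
  -- Br z' = scalar + nilpotent
  have hDr : IsNilpotent (Br z' - χ z' • 1) := by
    refine ⟨N, ?_⟩
    ext v
    have hco : ∀ (j : ℕ) (v : UN), (((Br z' - χ z' • 1) ^ j) v : V) = ((D z') ^ j) (v : V) := by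
      intro j
      induction j with
      | zero => intro v; rfl
      | succ j ih =>
          intro v
          have h1 : ((Br z' - χ z' • 1) ^ (j+1)) v
              = ((Br z' - χ z' • 1) ^ j) ((Br z' - χ z' • 1) v) := by
            rw [pow_succ]; rfl
          have h2 : ((D z') ^ (j+1)) (v : V) = ((D z') ^ j) (D z' (v : V)) := by
            rw [pow_succ]; rfl
          have h3 : (((Br z' - χ z' • 1) v) : V) = D z' (v : V) := rfl
          rw [h1, h2, ih ((Br z' - χ z' • 1) v), h3]
      -- done
    have h5 : ((D z') ^ N) (v : V) ∈ U (N - N) := hDpow N z' (v : V) v.2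
    rw [Nat.sub_self, hU0] at h5
    have h6 : ((D z') ^ N) (v : V) = 0 := by simpa using h5
    rw [hco N v, h6]
    rfl
  have htr1 : LinearMap.trace k UN (Br z') = χ z' * (finrank k UN : k) := by
    have h1 : Br z' = χ z' • 1 + (Br z' - χ z' • 1) := (add_sub_cancel _ _).symm
    rw [h1, map_add, map_smul]
    have h2 : LinearMap.trace k UN (Br z' - χ z' • 1) = 0 := by
      have := LinearMap.isNilpotent_trace_of_isNilpotent hDr
      exact this.eq_zero
    rw [h2, add_zero, LinearMap.trace_one, smul_eq_mul]
  -- w ∈ UN and w ≠ 0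
  have hwUN : w ∈ UN := by
    have : w ∈ U 1 := by
      have : (f ^ 0) w = w := rfl
      rw [← this]
      exact hmem 0 1 Nat.one_pos
    exact hUmono (by omega) this
  have hpos : 0 < finrank k UN := by
    have : Nontrivial UN := ⟨⟨⟨w, hwUN⟩, 0, by simp [Subtype.ext_iff, hw]⟩⟩
    exact finrank_pos
  have := htr0.symm.trans htr1 |>.symm
  have hc : χ z' * (finrank k UN : k) = 0 := this
  rcases mul_eq_zero.mp hc with h | h
  · exact h
  · exfalso
    exact (Nat.cast_ne_zero.mpr (Nat.pos_iff_ne_zero.mp hpos)) h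

/-- The weight space of `χ` is invariant under all of `g`. -/
lemma weight_space_invariant
    (I : LieIdeal k g) (χ : I → k) (w : V) (hw : w ≠ 0)
    (hwt : ∀ z : I, ⁅(z : g), w⁆ = χ z • w)
    (x : g) (v : V) (hv : ∀ z : I, ⁅(z : g), v⁆ = χ z • v) :
    ∀ z : I, ⁅(z : g), ⁅x, v⁆⁆ = χ z • ⁅x, v⁆ := by
  intro z
  have h1 : ⁅(z : g), ⁅x, v⁆⁆ = ⁅⁅(z : g), x⁆, v⁆ + ⁅x, ⁅(z : g), v⁆⁆ := leibniz_lie _ _ _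
  have h2 : (⁅x, (z : g)⁆ : g) ∈ I := I.lie_mem z.2
  have h3 : ⁅(z : g), x⁆ = -⁅x, (z : g)⁆ := (lie_skew _ _).symm
  have h4 : χ (⟨⁅x, (z : g)⁆, h2⟩ : I) = 0 :=
    weight_vanishes_on_bracket I χ w hw hwt x z
  have h5 : ⁅(⁅x, (z : g)⁆ : g), v⁆ = χ (⟨⁅x, (z : g)⁆, h2⟩ : I) • v := hv ⟨⁅x, (z : g)⁆, h2⟩
  rw [h1, h3, neg_lie, h5, h4, zero_smul, neg_zero, zero_add, hv z, lie_smul]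

end Core

section LieTheorem

universe u v

variable {k : Type*} [Field k] [IsAlgClosed k] [CharZero k]

/-- Lie's theorem: existence of a common eigenvector for a solvable Lie algebra
acting on a nonzero finite-dimensional module over an algebraically closed field
of characteristic zero. -/
lemma lie_theorem :
    ∀ (n : ℕ) (L : Type u) [LieRing L] [LieAlgebra k L] [FiniteDimensional k L]
      [LieAlgebra.IsSolvable L], Module.finrank k L ≤ n →
      ∀ (V : Type v) [AddCommGroup V] [Module k V] [FiniteDimensional k V] [Nontrivial V]
        [LieRingModule L V] [LieModule k L V],
      ∃ (χ : L → k) (v : V), v ≠ 0 ∧ ∀ x : L, ⁅x, v⁆ = χ x • v := by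
  intro n
  induction n with
  | zero =>
      intro L _ _ _ _ hn V _ _ _ _ _ _
      have h0 : Module.finrank k L = 0 := Nat.le_zero.mp hn
      have hsub : Subsingleton L := Module.finrank_zero_iff.mp h0
      obtain ⟨v, hv⟩ := exists_ne (0 : V)
      refine ⟨0, v, hv, fun x => ?_⟩
      have hx : x = 0 := Subsingleton.elim x 0
      rw [hx, zero_lie, Pi.zero_apply, zero_smul]
  | succ n IH =>
      intro L _ _ _ _ hn V _ _ _ _ _ _
      rcases Nat.lt_or_ge (Module.finrank k L) (n+1) with hlt | hge
      · exact IH L (Nat.lt_succ_iff.mp hlt) V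
      have hrank : Module.finrank k L = n + 1 := le_antisymm hn hge
      have hntL : Nontrivial L := by
        apply Module.nontrivial_of_finrank_pos (R := k)
        omega
      -- the derived ideal is proper
      have hD : LieAlgebra.derivedSeries k L 1 < ⊤ :=
        LieAlgebra.derivedSeries_lt_top_of_solvable k L
      set Dsub : Submodule k L := (LieAlgebra.derivedSeries k L 1).toSubmodule with hDsub
      obtain ⟨x₀, -, hx₀⟩ := SetLike.exists_of_lt hD
      have hx₀' : x₀ ∉ Dsub := hx₀
      -- construct a linear functional φ with φ x₀ = 1 vanishing on the derived ideal
      have hq : (Dsub.mkQ x₀ : L ⧸ Dsub) ≠ 0 := by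
        rw [Submodule.mkQ_apply, ne_eq, Submodule.Quotient.mk_eq_zero]
        exact hx₀'
      obtain ⟨ψ, hψ⟩ : ∃ ψ : Module.Dual k (L ⧸ Dsub), ψ (Dsub.mkQ x₀) ≠ 0 := by
        by_contra hcon
        push_neg at hcon
        exact hq ((Module.forall_dual_apply_eq_zero_iff k _).mp hcon)
      set φ : L →ₗ[k] k := ((ψ (Dsub.mkQ x₀))⁻¹ • ψ).comp Dsub.mkQ with hφ
      have hφx₀ : φ x₀ = 1 := by
        simp only [hφ, LinearMap.comp_apply, LinearMap.smul_apply, smul_eq_mul]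
        exact inv_mul_cancel₀ hψ
      have hφD : ∀ m ∈ LieAlgebra.derivedSeries k L 1, φ m = 0 := by
        intro m hm
        have : Dsub.mkQ m = 0 := by
          rw [Submodule.mkQ_apply, Submodule.Quotient.mk_eq_zero]
          exact hm
        simp [hφ, this]
      -- the kernel of φ is an ideal
      set I : LieIdeal k L :=
        { toSubmodule := LinearMap.ker φ
          lie_mem := by
            intro x m _
            have hbr : ⁅x, m⁆ ∈ LieAlgebra.derivedSeries k L 1 := by
              rw [LieAlgebra.derivedSeries_def, LieAlgebra.derivedSeriesOfIdeal_succ,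
                LieAlgebra.derivedSeriesOfIdeal_zero]
              exact LieSubmodule.lie_mem_lie (LieSubmodule.mem_top x) (LieSubmodule.mem_top m)
            show ⁅x, m⁆ ∈ LinearMap.ker φ
            rw [LinearMap.mem_ker]
            exact hφD _ hbr } with hI
      have hx₀I : x₀ ∉ I := by
        intro hmem
        have : φ x₀ = 0 := hmem
        rw [hφx₀] at this
        exact one_ne_zero this
      have hIne : I ≠ ⊤ := fun h => hx₀I (h ▸ LieSubmodule.mem_top x₀)
      have hIrank : Module.finrank k I ≤ n := by
        have hlt : (I : Submodule k L) < ⊤ := by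
          refine lt_of_le_of_ne le_top ?_
          intro h
          apply hIne
          apply (LieSubmodule.toSubmodule_inj I ⊤).mp
          simpa using h
        have h2 := Submodule.finrank_lt (K := k) (V := L) hlt.ne
        have h3 : Module.finrank k I = Module.finrank k (I : Submodule k L) := rfl
        omega
      have hIsolv : LieAlgebra.IsSolvable I := by
        have htop : LieAlgebra.IsSolvable (⊤ : LieIdeal k L) :=
          (LieAlgebra.solvable_iff_equiv_solvable LieIdeal.topEquiv).mpr inferInstance
        exact LieAlgebra.le_solvable_ideal_solvable le_top htop
      -- apply induction to the ideal I
      obtain ⟨χ₀, w, hw, hwt⟩ := IH I hIrank V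
      have hwt' : ∀ z : I, ⁅(z : L), w⁆ = χ₀ z • w := fun z => hwt z
      -- the weight space of χ₀
      set W : Submodule k V :=
        { carrier := {v | ∀ z : I, ⁅(z : L), v⁆ = χ₀ z • v}
          add_mem' := by
            intro a b ha hb z
            rw [lie_add, ha z, hb z, smul_add]
          zero_mem' := by
            intro z
            rw [lie_zero, smul_zero]
          smul_mem' := by
            intro c a ha z
            rw [lie_smul, ha z, smul_comm] } with hW
      have hwW : w ∈ W := hwt'
      -- W is invariant under all of L
      have hWinv : ∀ x : L, ∀ v ∈ W, ⁅x, v⁆ ∈ W := by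
        intro x v hv
        exact weight_space_invariant I χ₀ w hw hwt' x v hv
      -- the action of x₀ on W has an eigenvector
      have hWnt : Nontrivial W := ⟨⟨⟨w, hwW⟩, 0, by simp [Subtype.ext_iff, hw]⟩⟩
      set e : W →ₗ[k] W := (LieModule.toEnd k L V x₀).restrict
        (fun v hv => hWinv x₀ v hv) with he
      obtain ⟨c, hc⟩ := Module.End.exists_eigenvalue e
      obtain ⟨u, hu⟩ := hc.exists_hasEigenvector
      have hu0 : (u : V) ≠ 0 := fun h => hu.right (Subtype.ext h)
      have huW : (u : V) ∈ W := u.2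
      have hx₀u : ⁅x₀, (u : V)⁆ = c • (u : V) := by
        have := hu.apply_eq_smul
        have h2 : ((e u : W) : V) = ⁅x₀, (u : V)⁆ := rfl
        rw [← h2, this]
        rfl
      -- assemble the weight for all of L
      have hdecomp : ∀ x : L, x - φ x • x₀ ∈ I := by
        intro x
        show x - φ x • x₀ ∈ LinearMap.ker φ
        rw [LinearMap.mem_ker, map_sub, map_smul, hφx₀, smul_eq_mul, mul_one, sub_self]
      refine ⟨fun x => φ x * c + χ₀ ⟨x - φ x • x₀, hdecomp x⟩, (u : V), hu0, fun x => ?_⟩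
      have hx : x = φ x • x₀ + (x - φ x • x₀) := by abel
      calc ⁅x, (u : V)⁆ = ⁅φ x • x₀ + (x - φ x • x₀), (u : V)⁆ := by rw [← hx]
        _ = φ x • ⁅x₀, (u : V)⁆ + ⁅((⟨x - φ x • x₀, hdecomp x⟩ : I) : L), (u : V)⁆ := by
              rw [add_lie, smul_lie]
        _ = φ x • (c • (u : V)) + χ₀ ⟨x - φ x • x₀, hdecomp x⟩ • (u : V) := by
              rw [hx₀u, huW ⟨x - φ x • x₀, hdecomp x⟩]
        _ = (φ x * c + χ₀ ⟨x - φ x • x₀, hdecomp x⟩) • (u : V) := by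
              rw [add_smul, smul_smul]

end LieTheorem

/-- Over an algebraically closed field of characteristic zero, if `r` is the solvable
radical of a finite-dimensional Lie algebra `g`, then the ideal `[g, r]` acts trivially
on every finite-dimensional irreducible `g`-module. -/
theorem bracket_radical_acts_trivially
    (k : Type*) [Field k] [IsAlgClosed k] [CharZero k]
    (g : Type*) [LieRing g] [LieAlgebra k g] [FiniteDimensional k g]
    (V : Type*) [AddCommGroup V] [Module k V] [FiniteDimensional k V]
    [LieRingModule g V] [LieModule k g V] [LieModule.IsIrreducible k g V]
    (y : g) (hy : y ∈ ⁅(⊤ : LieIdeal k g), LieAlgebra.radical k g⁆) (v : V) :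
    ⁅y, v⁆ = 0 := by
  classical
  have hnt : Nontrivial V := LieModule.nontrivial_of_isIrreducible k g V
  set r : LieIdeal k g := LieAlgebra.radical k g with hr
  -- Lie's theorem applied to the radical
  obtain ⟨χ, v₀, hv₀, hwt⟩ := lie_theorem (Module.finrank k r) (↥r) le_rfl V
  have hwt' : ∀ z : r, ⁅(z : g), v₀⁆ = χ z • v₀ := fun z => hwt z
  -- the weight space is a g-submodule of V
  set W : LieSubmodule k g V :=
    { carrier := {u | ∀ z : r, ⁅(z : g), u⁆ = χ z • u}
      add_mem' := by
        intro a b ha hb z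
        rw [lie_add, ha z, hb z, smul_add]
      zero_mem' := by
        intro z
        rw [lie_zero, smul_zero]
      smul_mem' := by
        intro c a ha z
        rw [lie_smul, ha z, smul_comm]
      lie_mem := by
        intro x m hm
        exact weight_space_invariant r χ v₀ hv₀ hwt' x m hm } with hW
  have hv₀W : v₀ ∈ W := hwt'
  have hWne : W ≠ ⊥ := by
    intro h
    rw [h] at hv₀W
    exact hv₀ ((LieSubmodule.mem_bot _).mp hv₀W)
  have hWtop : W = ⊤ := by
    rcases eq_bot_or_eq_top W with h | h
    · exact absurd h hWne
    · exact h
  have hall : ∀ (u : V) (z : r), ⁅(z : g), u⁆ = χ z • u := by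
    intro u z
    have : u ∈ W := hWtop ▸ LieSubmodule.mem_top u
    exact this z
  -- the trace functional vanishes on ⁅⊤, r⁆
  set T : g →ₗ[k] k := (LinearMap.trace k V).comp (LieModule.toEnd k g V).toLinearMap with hT
  have hTvanish : ∀ m ∈ ⁅(⊤ : LieIdeal k g), r⁆, T m = 0 := by
    intro m hm
    have hm' : m ∈ Submodule.span k { m | ∃ x ∈ (⊤ : LieIdeal k g), ∃ n ∈ r, ⁅x, n⁆ = m } := by
      rw [← LieSubmodule.lieIdeal_oper_eq_linear_span']
      exact hm
    have hle : Submodule.span k { m | ∃ x ∈ (⊤ : LieIdeal k g), ∃ n ∈ r, ⁅x, n⁆ = m }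
        ≤ LinearMap.ker T := by
      rw [Submodule.span_le]
      rintro m'' ⟨x, -, nn, -, rfl⟩
      rw [SetLike.mem_coe, LinearMap.mem_ker]
      have : T ⁅x, nn⁆ = LinearMap.trace k V ⁅LieModule.toEnd k g V x, LieModule.toEnd k g V nn⁆ := by
        simp [hT, LieHom.map_lie]
      rw [this, Ring.lie_def, map_sub, LinearMap.trace_mul_comm, sub_self]
    exact LinearMap.mem_ker.mp (hle hm')
  -- y belongs to the radical
  have hyr : y ∈ r := LieSubmodule.lie_le_right r ⊤ hy
  set y' : r := ⟨y, hyr⟩ with hy'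
  -- the action of y is the scalar χ y'
  have hscalar : LieModule.toEnd k g V y = χ y' • 1 := by
    ext u
    have := hall u y'
    simpa [LieModule.toEnd_apply_apply] using this
  have htrace : T y = χ y' * (Module.finrank k V : k) := by
    simp only [hT, LinearMap.comp_apply, LieHom.coe_toLinearMap]
    rw [hscalar, map_smul, LinearMap.trace_one, smul_eq_mul]
  have hT0 : T y = 0 := hTvanish y hy
  have hχ0 : χ y' = 0 := by
    rw [htrace] at hT0
    rcases mul_eq_zero.mp hT0 with h | h
    · exact h
    · exfalso
      have : 0 < Module.finrank k V := Module.finrank_pos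
      exact (Nat.cast_ne_zero.mpr (Nat.pos_iff_ne_zero.mp this)) h
  have := hall v y'
  rw [hχ0, zero_smul] at this
  exact this
end

section
/- Let k be the field with 2 elements and let g be the 3-dimensional Lie algebra over k with basis i, j, k' satisfying [i,j] = k', [j,k'] = i and [k',i] = j. Then g is perfect (hence simple), but the semisimple part and the nilpotent part of the endomorphism ad(i) in its Jordan-Chevalley decomposition in gl(g) do not both belong to ad(g). -/
open Polynomial in
private lemma sqfree_xx : Squarefree (X^2 - X : Polynomial (ZMod 2)) := by
  apply Polynomial.Separable.squarefree
  unfold Polynomial.Separable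
  rw [show Polynomial.derivative (X^2 - X : Polynomial (ZMod 2)) = 1 by
    simp [show ((2:ZMod 2) = 0) from rfl]
    rw [CharTwo.add_self_eq_zero, zero_mul, zero_sub]; exact CharTwo.neg_eq 1]
  exact isCoprime_one_right

set_option maxHeartbeats 2000000 in
/-- Let `g` be the 3-dimensional Lie algebra over `F₂` with basis `i, j, k'` satisfying
`⁅i,j⁆ = k'`, `⁅j,k'⁆ = i`, `⁅k',i⁆ = j`.  Then `g` is perfect (hence simple), but the
semisimple and nilpotent parts of `ad i` in its Jordan–Chevalley decomposition in
`gl(g)` do not both belong to `ad(g)`. -/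
theorem cross_product_algebra_no_abstract_decomposition
    (g : Type*) [LieRing g] [LieAlgebra (ZMod 2) g]
    (B : Module.Basis (Fin 3) (ZMod 2) g)
    (i j k' : g) (hi : B 0 = i) (hj : B 1 = j) (hk : B 2 = k')
    (hij : ⁅i, j⁆ = k') (hjk : ⁅j, k'⁆ = i) (hki : ⁅k', i⁆ = j) :
    ⁅(⊤ : LieIdeal (ZMod 2) g), (⊤ : LieIdeal (ZMod 2) g)⁆ = ⊤ ∧
      LieAlgebra.IsSimple (ZMod 2) g ∧
      ∀ S N : Module.End (ZMod 2) g,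
        LieAlgebra.ad (ZMod 2) g i = S + N → S.IsSemisimple → IsNilpotent N →
        Commute S N →
        ¬ (S ∈ Set.range (LieAlgebra.ad (ZMod 2) g) ∧
           N ∈ Set.range (LieAlgebra.ad (ZMod 2) g)) := by
  haveI : Module.Finite (ZMod 2) g := Module.Finite.of_basis B
  -- characteristic-two facts
  have addself : ∀ z : g, z + z = 0 := by
    intro z
    rw [← two_smul (ZMod 2) z, show ((2:ZMod 2) = 0) from rfl, zero_smul]
  have negg : ∀ z : g, -z = z := fun z => neg_eq_of_add_eq_zero_left (addself z)
  -- reversed brackets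
  have hji : ⁅j, i⁆ = k' := by
    have h := lie_skew i j; rw [negg] at h; rw [h, hij]
  have hkj : ⁅k', j⁆ = i := by
    have h := lie_skew j k'; rw [negg] at h; rw [h, hjk]
  have hik : ⁅i, k'⁆ = j := by
    have h := lie_skew k' i; rw [negg] at h; rw [h, hki]
  -- coordinates
  have hrep : ∀ x : g, x = B.repr x 0 • i + B.repr x 1 • j + B.repr x 2 • k' := by
    intro x
    conv_lhs => rw [← B.sum_repr x]
    rw [Fin.sum_univ_three, hi, hj, hk]
  have hcoord : ∀ a b c a' b' c' : ZMod 2,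
      a • i + b • j + c • k' = a' • i + b' • j + c' • k' → a = a' ∧ b = b' ∧ c = c' := by
    intro a b c a' b' c' h
    rw [← hi, ← hj, ← hk] at h
    have h0 := congrArg (fun z => B.repr z 0) h
    have h1 := congrArg (fun z => B.repr z 1) h
    have h2 := congrArg (fun z => B.repr z 2) h
    simp [Finsupp.single_apply] at h0 h1 h2
    exact ⟨h0, h1, h2⟩
  have hzero : ∀ a b c : ZMod 2, a • i + b • j + c • k' = 0 → a = 0 ∧ b = 0 ∧ c = 0 := by
    intro a b c h
    exact hcoord a b c 0 0 0 (by simpa using h)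
  have hZ : ∀ z : ZMod 2, z = 0 ∨ z = 1 := by decide
  -- k' ≠ 0
  have hk'ne : k' ≠ 0 := by rw [← hk]; exact B.ne_zero 2
  -- Part 1: perfect
  have hiT : ∀ (I : LieIdeal (ZMod 2) g), i ∈ I → j ∈ I → k' ∈ I → I = ⊤ := by
    intro I hiI hjI hkI
    rw [eq_top_iff]
    intro x _
    rw [hrep x]
    exact I.add_mem (I.add_mem (I.smul_mem _ hiI) (I.smul_mem _ hjI)) (I.smul_mem _ hkI)
  have perfect : ⁅(⊤ : LieIdeal (ZMod 2) g), (⊤ : LieIdeal (ZMod 2) g)⁆ = ⊤ := by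
    apply hiT
    · rw [← hjk]; exact LieSubmodule.lie_mem_lie (LieSubmodule.mem_top _) (LieSubmodule.mem_top _)
    · rw [← hki]; exact LieSubmodule.lie_mem_lie (LieSubmodule.mem_top _) (LieSubmodule.mem_top _)
    · rw [← hij]; exact LieSubmodule.lie_mem_lie (LieSubmodule.mem_top _) (LieSubmodule.mem_top _)
  refine ⟨perfect, ?_, ?_⟩
  · -- simplicity
    constructor
    · intro I
      by_cases hI : I = ⊥
      · exact Or.inl hI
      right
      rw [LieSubmodule.eq_bot_iff] at hI
      push_neg at hI
      obtain ⟨x, hxI, hxne⟩ := hI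
      -- propagation lemmas
      have stepi : i ∈ I → I = ⊤ := by
        intro h
        have hk'I : k' ∈ I := by rw [← hji]; exact I.lie_mem h
        have hjI : j ∈ I := by rw [← hik]; exact I.lie_mem hk'I
        exact hiT I h hjI hk'I
      have stepj : j ∈ I → I = ⊤ := by
        intro h
        have hiI : i ∈ I := by rw [← hkj]; exact I.lie_mem h
        exact stepi hiI
      have stepk : k' ∈ I → I = ⊤ := by
        intro h
        have hiI : i ∈ I := by rw [← hjk]; exact I.lie_mem h
        exact stepi hiI
      have hx := hrep x
      set a := B.repr x 0 with ha
      set b := B.repr x 1 with hb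
      set c := B.repr x 2 with hc
      rcases hZ a with ha' | ha' <;> rcases hZ b with hb' | hb' <;> rcases hZ c with hc' | hc' <;>
        rw [ha', hb', hc'] at hx <;>
        simp only [zero_smul, one_smul, zero_add, add_zero] at hx
      · exact absurd hx hxne
      · -- x = k'
        exact stepk (hx ▸ hxI)
      · -- x = j
        exact stepj (hx ▸ hxI)
      · -- x = j + k'
        apply stepi
        have h1 := I.lie_mem (x := j) hxI
        rw [hx, lie_add, lie_self, zero_add, hjk] at h1
        exact h1
      · -- x = i
        exact stepi (hx ▸ hxI)
      · -- x = i + k'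
        apply stepj
        have h1 := I.lie_mem (x := i) hxI
        rw [hx, lie_add, lie_self, zero_add, hik] at h1
        exact h1
      · -- x = i + j
        apply stepk
        have h1 := I.lie_mem (x := i) hxI
        rw [hx, lie_add, lie_self, zero_add, hij] at h1
        exact h1
      · -- x = i + j + k'
        apply stepi
        have h1 := I.lie_mem (x := i) hxI
        rw [hx, lie_add, lie_add, lie_self, zero_add, hij, hik] at h1
        have h2 := I.lie_mem (x := j) h1
        rw [lie_add, hjk, lie_self, add_zero] at h2
        exact h2
    · intro habel
      apply hk'ne
      rw [← hij]
      exact trivial_lie_zero _ _ _ _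
  · -- Jordan-Chevalley part
    intro S N hSN hSs hNn hComm
    rintro ⟨⟨x, hxS⟩, -⟩
    set D := LieAlgebra.ad (ZMod 2) g i with hD
    have hDap : ∀ z : g, D z = ⁅i, z⁆ := fun z => rfl
    have hDi : D i = 0 := by rw [hDap, lie_self]
    have hDj : D j = k' := by rw [hDap, hij]
    have hDk : D k' = j := by rw [hDap, hik]
    have addselfE : ∀ A : Module.End (ZMod 2) g, A + A = 0 := by
      intro A
      rw [← two_smul (ZMod 2) A, show ((2:ZMod 2) = 0) from rfl, zero_smul]
    set S₀ : Module.End (ZMod 2) g := D * D with hS₀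
    set N₀ : Module.End (ZMod 2) g := D + D * D with hN₀
    have hS₀i : S₀ i = 0 := by
      simp only [hS₀, Module.End.mul_apply, hDi, map_zero]
    have hS₀j : S₀ j = j := by
      simp only [hS₀, Module.End.mul_apply, hDj, hDk]
    have hS₀k : S₀ k' = k' := by
      simp only [hS₀, Module.End.mul_apply, hDk, hDj]
    have hD0 : D 0 = 0 := map_zero D
    have twoE : ∀ A : Module.End (ZMod 2) g, (2:ℕ) • A = 0 := by
      intro A; rw [two_nsmul]; exact addselfE A
    have hD3 : D * D * D = D := by
      apply LinearMap.ext
      intro z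
      rw [hrep z]
      simp only [Module.End.mul_apply, map_add, map_smul, hDi, hDj, hDk, hD0,
        smul_zero, zero_add, add_zero]
    -- S₀ is idempotent, hence semisimple
    have hS₀sq : S₀ * S₀ = S₀ := by
      rw [hS₀, ← mul_assoc, hD3]
    have hS₀ss : S₀.IsSemisimple := by
      apply Module.End.isSemisimple_of_squarefree_aeval_eq_zero sqfree_xx
      rw [map_sub, Polynomial.aeval_X_pow, Polynomial.aeval_X, pow_two, hS₀sq, sub_self]
    -- N₀ is nilpotent
    have hN₀sq : N₀ * N₀ = 0 := by
      rw [hN₀]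
      simp only [mul_add, add_mul, ← mul_assoc, hD3]
      rw [show D * D + D + (D + D * D) = (D + D) + (D * D + D * D) from by abel]
      rw [addselfE, addselfE, add_zero]
    have hN₀n : IsNilpotent N₀ := ⟨2, by rw [pow_two, hN₀sq]⟩
    -- commutation
    have hSD : Commute S D := by
      rw [hSN]; exact (Commute.refl S).add_right hComm
    have hND : Commute N D := by
      rw [hSN]; exact hComm.symm.add_right (Commute.refl N)
    have hSS₀ : Commute S S₀ := hSD.mul_right hSD
    have hNN₀ : Commute N N₀ := hND.add_right (hND.mul_right hND)
    -- T := S + S₀ equals N + N₀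
    have hT : S + S₀ = N + N₀ := by
      have h1 : D = S + N := hSN
      rw [hN₀, h1]
      rw [show N + (S + N + (S + N) * (S + N)) = (N + N) + (S + (S+N)*(S+N)) by abel]
      rw [addselfE, zero_add, hS₀]
      rw [h1]
    have hTss : (S + S₀).IsSemisimple :=
      Module.End.IsSemisimple.add_of_commute hSS₀ hSs hS₀ss
    have hTn : IsNilpotent (S + S₀) := by
      rw [hT]; exact Commute.isNilpotent_add hNN₀ hNn hN₀n
    have hT0 : S + S₀ = 0 := Module.End.eq_zero_of_isNilpotent_isSemisimple hTn hTss
    have hSeq : S = S₀ := by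
      have : S + (S + S₀) = S := by rw [hT0, add_zero]
      rw [← add_assoc, addselfE, zero_add] at this
      exact this.symm
    -- now S₀ = ad x, contradiction applying to j
    rw [hSeq] at hxS
    have happ : ⁅x, j⁆ = j := by
      have h : (LieAlgebra.ad (ZMod 2) g x) j = S₀ j := by rw [hxS]
      rw [hS₀j] at h
      exact h
    obtain ⟨a, b, c, hx⟩ : ∃ a b c : ZMod 2, x = a • i + b • j + c • k' := ⟨B.repr x 0, B.repr x 1, B.repr x 2, hrep x⟩
    rw [hx, add_lie, add_lie, smul_lie, smul_lie, smul_lie, hij, lie_self, hkj,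
      smul_zero] at happ
    -- happ : a • k' + 0 + c • i = j
    have h2 : c • i + (0:ZMod 2) • j + a • k'
        = (0:ZMod 2) • i + (1:ZMod 2) • j + (0:ZMod 2) • k' := by
      simp only [zero_smul, one_smul, zero_add, add_zero]
      rw [← happ]
      abel
    exact one_ne_zero ((hcoord _ _ _ _ _ _ h2).2.1).symm
end

section
/- Let k be a field of characteristic zero, g a finite-dimensional Lie algebra over k, and x ∈ g. If x has an abstract Jordan-Chevalley decomposition, then x belongs to the derived algebra [g,g]. -/
universe u

attribute [local instance 100] LieRing.ofAssociativeRing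

/-- `x = s + n` is an abstract Jordan–Chevalley decomposition of `x` in the Lie algebra `g`:
`x = s + n`, `⁅s, n⁆ = 0`, and for every finite-dimensional representation
`π : g → gl(V)` the endomorphism `π s` is semisimple, `π n` is nilpotent and they commute
(so that `π x = π s + π n` is the Jordan–Chevalley decomposition of `π x` in `gl(V)`). -/
def IsAbstractJCD (k : Type*) [Field k] {g : Type*} [LieRing g] [LieAlgebra k g]
    (x s n : g) : Prop :=
  x = s + n ∧ ⁅s, n⁆ = 0 ∧
    ∀ (V : Type u) [AddCommGroup V] [Module k V] [FiniteDimensional k V]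
      (π : g →ₗ⁅k⁆ Module.End k V),
      (π s).IsSemisimple ∧ IsNilpotent (π n) ∧ Commute (π s) (π n)

/-- `x` has an abstract Jordan–Chevalley decomposition if there exist *unique* `s, n`
as above. -/
def HasAbstractJCD (k : Type*) [Field k] {g : Type*} [LieRing g] [LieAlgebra k g]
    (x : g) : Prop :=
  ∃! p : g × g, IsAbstractJCD.{u} k x p.1 p.2

noncomputable def scalarLieRep {k : Type*} [Field k] {g : Type*} [LieRing g] [LieAlgebra k g]
    {V : Type*} [AddCommGroup V] [Module k V]
    (f : g →ₗ[k] k) (hf : ∀ a b : g, f ⁅a, b⁆ = 0) (A : Module.End k V) :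
    g →ₗ⁅k⁆ Module.End k V where
  toLinearMap := (LinearMap.toSpanSingleton k (Module.End k V) A).comp f
  map_lie' := by
    intro a b
    simp [LinearMap.toSpanSingleton_apply, hf, smul_lie, lie_smul, lie_self]

/-- If an element `x` of a finite-dimensional Lie algebra over a field of characteristic
zero has an abstract Jordan–Chevalley decomposition, then `x ∈ [g,g]`. -/
theorem mem_derived_of_hasAbstractJCD
    (k : Type*) [Field k] [CharZero k]
    (g : Type*) [LieRing g] [LieAlgebra k g] [FiniteDimensional k g] (x : g)
    (hx : HasAbstractJCD.{u} k x) :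
    x ∈ ⁅(⊤ : LieIdeal k g), (⊤ : LieIdeal k g)⁆ := by
  by_contra hmem
  obtain ⟨⟨s, n⟩, ⟨hsn, hcomm, hrep⟩, huniq⟩ := hx
  by_cases hsm : Small.{u} k
  · -- main case: we can build nontrivial representations in universe u
    -- a linear functional vanishing on the derived ideal with f x ≠ 0
    set I : Submodule k g :=
      ((⁅(⊤ : LieIdeal k g), (⊤ : LieIdeal k g)⁆ : LieIdeal k g) : Submodule k g) with hI
    have hxI : x ∉ I := hmem
    obtain ⟨f, hfx, hmap⟩ := Submodule.exists_dual_map_eq_bot_of_notMem hxI inferInstance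
    have hf : ∀ a b : g, f ⁅a, b⁆ = 0 := by
      intro a b
      have hab : ⁅a, b⁆ ∈ I := LieSubmodule.lie_mem_lie trivial trivial
      have : f ⁅a, b⁆ ∈ I.map f := Submodule.mem_map_of_mem hab
      rwa [hmap, Submodule.mem_bot] at this
    -- first representation: scalars on a 1-dimensional space
    have hfn : f n = 0 := by
      let e := Shrink.linearEquiv k k
      haveI : FiniteDimensional k (Shrink.{u} k) := e.symm.finiteDimensional
      obtain ⟨-, hnil, -⟩ := hrep (Shrink.{u} k) (scalarLieRep f hf 1)
      obtain ⟨m, hm⟩ := hnil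
      have hm' : (f n) ^ m • (1 : Module.End k (Shrink.{u} k)) = 0 := by
        have : scalarLieRep f hf (1 : Module.End k (Shrink.{u} k)) n = f n • 1 := rfl
        rwa [this, smul_pow, one_pow] at hm
      have h1 : (f n) ^ m • e.symm 1 = 0 := by
        have := congrArg (fun T : Module.End k (Shrink.{u} k) => T (e.symm 1)) hm'
        simpa using this
      have hv : e.symm 1 ≠ 0 := by
        simp [LinearEquiv.map_eq_zero_iff]
      have : (f n) ^ m = 0 := by
        rcases smul_eq_zero.mp h1 with h | h
        · exact h
        · exact absurd h hv
      exact (pow_eq_zero_iff'.mp this).1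
    -- second representation: nilpotent 2×2 matrices
    have hfs : f s = 0 := by
      let e := Shrink.linearEquiv k (k × k)
      haveI : FiniteDimensional k (Shrink.{u} (k × k)) := e.symm.finiteDimensional
      let N : Module.End k (k × k) := (LinearMap.inl k k k).comp (LinearMap.snd k k k)
      let N' : Module.End k (Shrink.{u} (k × k)) :=
        (e.symm.toLinearMap.comp N).comp e.toLinearMap
      obtain ⟨hss, -, -⟩ := hrep (Shrink.{u} (k × k)) (scalarLieRep f hf N')
      have hrfl : scalarLieRep f hf N' s = f s • N' := rfl
      have hNN : ∀ p : k × k, N (N p) = 0 := by intro p; simp [N]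
      have hN'sq : N' * N' = 0 := by
        apply LinearMap.ext
        intro v
        show e.symm (N (e (e.symm (N (e v))))) = 0
        rw [e.apply_symm_apply, hNN, map_zero]
      have hnil : IsNilpotent (scalarLieRep f hf N' s) := by
        refine ⟨2, ?_⟩
        rw [hrfl, smul_pow, pow_two N', hN'sq, smul_zero]
      have hzero : scalarLieRep f hf N' s = 0 :=
        Module.End.eq_zero_of_isNilpotent_isSemisimple hnil hss
      have hN'app : N' (e.symm ((0 : k), (1 : k))) = e.symm ((1 : k), (0 : k)) := by
        show e.symm (N (e (e.symm (0, 1)))) = _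
        rw [e.apply_symm_apply]
        simp [N]
      have h1 : f s • e.symm ((1 : k), (0 : k)) = 0 := by
        have h := DFunLike.congr_fun hzero (e.symm ((0 : k), (1 : k)))
        rw [hrfl] at h
        rw [LinearMap.smul_apply, hN'app] at h
        simpa using h
      have hv : e.symm ((1 : k), (0 : k)) ≠ 0 := by
        simp [LinearEquiv.map_eq_zero_iff, Prod.ext_iff]
      rcases smul_eq_zero.mp h1 with h | h
      · exact h
      · exact absurd h hv
    exact absurd (by rw [hsn, map_add, hfs, hfn, add_zero]) hfx
  · -- degenerate case: every finite-dimensional module in universe u is trivial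
    have hsub : ∀ (V : Type u) [AddCommGroup V] [Module k V], Subsingleton V := by
      intro V _ _
      by_contra hns
      haveI : Nontrivial V := not_subsingleton_iff_nontrivial.mp hns
      obtain ⟨v, hv⟩ := exists_ne (0 : V)
      exact hsm (small_of_injective (smul_left_injective k hv))
    have key : ∀ y z : g, IsAbstractJCD.{u} k x y z → IsAbstractJCD.{u} k x z y := by
      intro y z ⟨h1, h2, h3⟩
      refine ⟨by rw [h1, add_comm], by rw [← lie_skew, h2, neg_zero], ?_⟩
      intro V _ _ _ π
      haveI := hsub V
      obtain ⟨a, b, c⟩ := h3 V π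
      exact ⟨Subsingleton.elim (π y) (π z) ▸ a, Subsingleton.elim (π z) (π y) ▸ b,
        Subsingleton.elim _ _⟩
    -- now (x, 0) and (0, x) are both decompositions
    have hx0 : IsAbstractJCD.{u} k x x 0 := by
      refine ⟨(add_zero x).symm, lie_zero x, ?_⟩
      intro V _ _ _ π
      haveI := hsub V
      obtain ⟨a, b, c⟩ := hrep V π
      exact ⟨Subsingleton.elim (π s) (π x) ▸ a, Subsingleton.elim (π n) (π 0) ▸ b,
        Subsingleton.elim _ _⟩
    have h0x := key x 0 hx0
    have h3 := huniq (x, 0) hx0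
    have h4 := huniq (0, x) h0x
    have hx0' : x = 0 := congrArg Prod.fst (h3.trans h4.symm)
    exact hmem (hx0' ▸ zero_mem _)
end
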